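/- Let b > 0 and let M be a d × d real symmetric positive definite matrix with tr(M) < b. Then 0 ≤ −ln(det M) − b ln(1 − tr(M)/b) + (b + d) ln(b/(b + d)) ≤ tr(M)/(1 − tr(M)/b)² − 2d/(1 − tr(M)/b) + tr(M⁻¹). -/

import Mathlib

lemma helper_inv_trace {n : Type*} [Fintype n] [DecidableEq n]
    (A U : Matrix n n ℝ) (v : n → ℝ) (hU1 : star U * U = 1) (hU2 : U * star U = 1)
    (hsp : A = U * Matrix.diagonal v * star U) (hv : ∀ i, v i ≠ 0) :
    A.trace = ∑ i, v i ∧ A⁻¹.trace = ∑ i, (v i)⁻¹ := by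
  constructor
  · rw [hsp, Matrix.trace_mul_cycle, hU1, Matrix.one_mul,
      Matrix.trace_diagonal]
  · have hN : A * (U * Matrix.diagonal (fun i => (v i)⁻¹) * star U) = 1 := by
      rw [hsp]
      calc (U * Matrix.diagonal v * star U) * (U * Matrix.diagonal (fun i => (v i)⁻¹) * star U)
          = U * (Matrix.diagonal v * ((star U) * U) * Matrix.diagonal (fun i => (v i)⁻¹))
            * star U := by simp only [Matrix.mul_assoc]
        _ = 1 := by
            rw [hU1, Matrix.mul_one, Matrix.diagonal_mul_diagonal]
            have : (fun i => v i * (v i)⁻¹) = fun _ => (1:ℝ) := by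
              funext i; simp [mul_inv_cancel₀ (hv i)]
            rw [this, Matrix.diagonal_one, Matrix.mul_one, hU2]
    rw [Matrix.inv_eq_right_inv hN, Matrix.trace_mul_cycle, hU1, Matrix.one_mul,
      Matrix.trace_diagonal]

lemma my_traces {n : Type*} [Fintype n] [DecidableEq n]
    {A : Matrix n n ℝ} (hA : A.PosDef) :
    A.trace = ∑ i, hA.1.eigenvalues i ∧ A⁻¹.trace = ∑ i, (hA.1.eigenvalues i)⁻¹ := by
  refine helper_inv_trace A hA.1.eigenvectorUnitary hA.1.eigenvalues
    (Matrix.UnitaryGroup.star_mul_self _) (Matrix.mem_unitaryGroup_iff.mp hA.1.eigenvectorUnitary.2)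
    ?_ (fun i => (hA.eigenvalues_pos i).ne')
  simpa using hA.1.spectral_theorem

lemma real_part (d : ℕ) (b s T L : ℝ) (hb : 0 < b) (hs : 0 < s) (hsb : s < b) (hT : 0 ≤ T)
    (hCS : (d:ℝ)^2 ≤ s*T)
    (hL1 : L ≤ d * Real.log (b/(b+d)) + (s*(b+d)/b - d))
    (hL2 : d * Real.log (1 - s/b) - L ≤ (1 - s/b)*T - d) :
    0 ≤ -L - b * Real.log (1 - s / b) + (b + d) * Real.log (b / (b + d)) ∧
      -L - b * Real.log (1 - s / b) + (b + d) * Real.log (b / (b + d)) ≤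
        s / (1 - s / b) ^ 2 - 2 * d / (1 - s / b) + T := by
  have hbd : (0:ℝ) < b + d := by positivity
  have hy : (0:ℝ) < 1 - s / b := by
    have : s / b < 1 := (div_lt_one hb).mpr hsb
    linarith
  have hc : (0:ℝ) < b / (b + d) := div_pos hb hbd
  have h2 : Real.log (1 - s/b) - Real.log (b/(b+d)) ≤ (1 - s/b)/(b/(b+d)) - 1 := by
    rw [← Real.log_div hy.ne' hc.ne']
    exact Real.log_le_sub_one_of_pos (div_pos hy hc)
  have h3 : Real.log (b/(b+d)) - Real.log (1 - s/b) ≤ (b/(b+d))/(1 - s/b) - 1 := by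
    rw [← Real.log_div hc.ne' hy.ne']
    exact Real.log_le_sub_one_of_pos (div_pos hc hy)
  constructor
  · have hq : b * ((1 - s/b)/(b/(b+d))) = (b+d) - s*(b+d)/b := by
      field_simp
    have h2' : b * Real.log (1 - s/b) ≤ b * Real.log (b/(b+d)) + b * ((1 - s/b)/(b/(b+d))) - b :=
      calc b * Real.log (1 - s/b)
          ≤ b * (Real.log (b/(b+d)) + ((1 - s/b)/(b/(b+d)) - 1)) :=
            mul_le_mul_of_nonneg_left (by linarith) hb.le
        _ = b * Real.log (b/(b+d)) + b * ((1 - s/b)/(b/(b+d))) - b := by ring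
    linarith
  · have hq2 : (b+d) * ((b/(b+d))/(1 - s/b)) = b / (1 - s/b) := by
      rw [div_div, mul_div_assoc', mul_div_mul_left _ _ hbd.ne']
    have h3' : (b+d) * (Real.log (b/(b+d)) - Real.log (1 - s/b)) ≤ b / (1 - s/b) - (b+d) :=
      calc (b+d) * (Real.log (b/(b+d)) - Real.log (1 - s/b))
          ≤ (b+d) * ((b/(b+d))/(1 - s/b) - 1) := mul_le_mul_of_nonneg_left h3 hbd.le
        _ = b / (1 - s/b) - (b+d) := by rw [mul_sub, mul_one, hq2]
    have key : 0 ≤ s - 2*d*(1 - s/b) + T*(1 - s/b)^2 := by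
      nlinarith [sq_nonneg (s - d*(1 - s/b)), mul_le_mul_of_nonneg_right hCS (sq_nonneg (1 - s/b)),
        hs, hy]
    have hfin : (1 - s/b)*T - d + b/(1 - s/b) - (b+d) ≤ s/(1 - s/b)^2 - 2*d/(1 - s/b) + T := by
      rw [← sub_nonneg]
      have hexp : s/(1 - s/b)^2 - 2*d/(1 - s/b) + T - ((1 - s/b)*T - d + b/(1 - s/b) - (b+d)) =
          s*(s - 2*d*(1 - s/b) + T*(1 - s/b)^2)/(b*(1 - s/b)^2) := by
        have hbs : b - s ≠ 0 := sub_ne_zero.mpr hsb.ne'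
        field_simp [hy.ne', hb.ne', hbs]
        ring
      rw [hexp]
      exact div_nonneg (mul_nonneg hs.le key) (by positivity)
    linarith


/-- For `b > 0` and a `d × d` real symmetric positive definite matrix `M` with `tr(M) < b`,
`0 ≤ −ln(det M) − b ln(1 − tr(M)/b) + (b + d) ln(b/(b + d))
   ≤ tr(M)/(1 − tr(M)/b)² − 2d/(1 − tr(M)/b) + tr(M⁻¹)`. -/
theorem fene_p_free_energy_ineq {d : ℕ} (b : ℝ) (hb : 0 < b)
    (M : Matrix (Fin d) (Fin d) ℝ) (hM : M.PosDef) (htr : M.trace < b) :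
    0 ≤ -Real.log M.det - b * Real.log (1 - M.trace / b) +
        (b + d) * Real.log (b / (b + d)) ∧
      -Real.log M.det - b * Real.log (1 - M.trace / b) +
          (b + d) * Real.log (b / (b + d)) ≤
        M.trace / (1 - M.trace / b) ^ 2 - 2 * d / (1 - M.trace / b) + M⁻¹.trace := by
  rcases Nat.eq_zero_or_pos d with hd0 | hd0
  · subst hd0
    have h1 : M.trace = 0 := by simp [Matrix.trace]
    have h2 : M⁻¹.trace = 0 := by simp [Matrix.trace]
    have h3 : M.det = 1 := Matrix.det_fin_zero
    rw [h1, h2, h3]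
    norm_num [Real.log_one, div_self hb.ne']
  · have hne : Nonempty (Fin d) := Fin.pos_iff_nonempty.mp hd0
    obtain ⟨hs_eq, hT_eq⟩ := my_traces hM
    set lam := hM.1.eigenvalues with hlam
    have hpos : ∀ i, 0 < lam i := fun i => hM.eigenvalues_pos i
    have hdet : M.det = ∏ i, lam i := by simpa using hM.1.det_eq_prod_eigenvalues
    have hlogdet : Real.log M.det = ∑ i, Real.log (lam i) := by
      rw [hdet]; exact Real.log_prod (fun i _ => (hpos i).ne')
    set s := ∑ i, lam i with hsdef
    set T := ∑ i, (lam i)⁻¹ with hTdef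
    have hs : 0 < s := Finset.sum_pos (fun i _ => hpos i) Finset.univ_nonempty
    have hsb : s < b := hs_eq ▸ htr
    have hT : 0 ≤ T := Finset.sum_nonneg (fun i _ => (inv_pos.mpr (hpos i)).le)
    have hbd : (0:ℝ) < b + d := by positivity
    have hc : (0:ℝ) < b / (b + d) := div_pos hb hbd
    have hy : (0:ℝ) < 1 - s / b := by
      have : s / b < 1 := (div_lt_one hb).mpr hsb
      linarith
    have hCS : (d:ℝ)^2 ≤ s * T := by
      have h := Finset.sum_sq_le_sum_mul_sum_of_sq_eq_mul Finset.univ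
        (r := fun _ : Fin d => (1:ℝ)) (f := lam) (g := fun i => (lam i)⁻¹)
        (fun i _ => (hpos i).le) (fun i _ => (inv_pos.mpr (hpos i)).le)
        (fun i _ => by rw [one_pow, mul_inv_cancel₀ (hpos i).ne'])
      simpa using h
    have hL1 : (∑ i, Real.log (lam i)) ≤ d * Real.log (b/(b+d)) + (s*(b+d)/b - d) := by
      have h1 : ∀ i, Real.log (lam i) ≤ Real.log (b/(b+d)) + (lam i * ((b+d)/b) - 1) := by
        intro i
        have h := Real.log_le_sub_one_of_pos (div_pos (hpos i) hc)
        rw [Real.log_div (hpos i).ne' hc.ne'] at h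
        have heq : lam i / (b/(b+d)) = lam i * ((b+d)/b) := by
          rw [div_div_eq_mul_div, mul_div_assoc]
        rw [heq] at h
        linarith
      calc (∑ i, Real.log (lam i))
          ≤ ∑ i, (Real.log (b/(b+d)) + (lam i * ((b+d)/b) - 1)) :=
            Finset.sum_le_sum (fun i _ => h1 i)
        _ = d * Real.log (b/(b+d)) + (s*(b+d)/b - d) := by
            rw [Finset.sum_add_distrib, Finset.sum_sub_distrib, ← Finset.sum_mul,
              Finset.sum_const, Finset.sum_const, Finset.card_univ, Fintype.card_fin,
              nsmul_eq_mul, nsmul_eq_mul, mul_one, ← hsdef, ← mul_div_assoc]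
    have hL2 : d * Real.log (1 - s/b) - (∑ i, Real.log (lam i)) ≤ (1 - s/b)*T - d := by
      have h1 : ∀ i, Real.log (1 - s/b) - Real.log (lam i) ≤ (1 - s/b) * (lam i)⁻¹ - 1 := by
        intro i
        have h := Real.log_le_sub_one_of_pos (div_pos hy (hpos i))
        rw [Real.log_div hy.ne' (hpos i).ne', div_eq_mul_inv] at h
        exact h
      calc d * Real.log (1 - s/b) - (∑ i, Real.log (lam i))
          = ∑ i, (Real.log (1 - s/b) - Real.log (lam i)) := by
            rw [Finset.sum_sub_distrib, Finset.sum_const, Finset.card_univ, Fintype.card_fin,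
              nsmul_eq_mul]
        _ ≤ ∑ i, ((1 - s/b) * (lam i)⁻¹ - 1) := Finset.sum_le_sum (fun i _ => h1 i)
        _ = (1 - s/b)*T - d := by
            rw [Finset.sum_sub_distrib, ← Finset.mul_sum, Finset.sum_const, Finset.card_univ,
              Fintype.card_fin, nsmul_eq_mul, mul_one, ← hTdef]
    rw [hs_eq, hT_eq, hlogdet]
    exact real_part d b s T _ hb hs hsb hT hCS hL1 hL2
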